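/- arXiv:2105.07860 — 5 statements merged into one kernel-verified Lean document; each statement's English description precedes it below -/
import Mathlib

section
/- For p = 3 and L = k[t]/(t^3 − ω), the map Der_k(L) → sl_2(k) sending (a + bt + ct^2)∂ to the matrix (b a; −c −b) is a linear bijection that respects the Lie bracket and the 3-map. -/
/-- `L = k[t]/(t³ - ω)` in characteristic 3. -/
noncomputable abbrev L3 (k : Type*) [Field k] (ω : k) : Type _ :=
  AdjoinRoot (Polynomial.X ^ 3 - Polynomial.C ω)

/-- The derivation `(a + bt + ct²)∂` of `L = k[t]/(t³ - ω)` as a `k`-linear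
endomorphism, where `E = ∂` is the derivation with `∂(t) = 1`. -/
noncomputable def D3 {k : Type*} [Field k] (ω : k)
    (E : Derivation k (L3 k ω) (L3 k ω)) (a b c : k) : L3 k ω →ₗ[k] L3 k ω :=
  (algebraMap k (L3 k ω) a
    + algebraMap k (L3 k ω) b * AdjoinRoot.root (Polynomial.X ^ 3 - Polynomial.C ω)
    + algebraMap k (L3 k ω) c
        * AdjoinRoot.root (Polynomial.X ^ 3 - Polynomial.C ω) ^ 2)
    • E.toLinearMap

/-- The matrix `(b a; -c -b) ∈ sl₂(k)` associated to `(a + bt + ct²)∂`. -/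
def M3 {k : Type*} [Field k] (a b c : k) : Matrix (Fin 2) (Fin 2) k :=
  !![b, a; -c, -b]

open Polynomial in
/-- The power basis `1, t, t²` of `L3 k ω`. -/
noncomputable def B3 {k : Type*} [Field k] (ω : k) : Module.Basis (Fin 3) k (L3 k ω) :=
  (AdjoinRoot.powerBasis' (monic_X_pow_sub_C ω (by norm_num))).basis.reindex
    (finCongr (by simp [AdjoinRoot.powerBasis', natDegree_X_pow_sub_C]))

open Polynomial in
lemma B3_apply {k : Type*} [Field k] (ω : k) (i : Fin 3) :
    B3 ω i = (AdjoinRoot.root (X ^ 3 - C ω)) ^ (i : ℕ) := by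
  rw [B3, Module.Basis.reindex_apply, PowerBasis.basis_eq_pow]
  simp [AdjoinRoot.powerBasis']; rfl

open Polynomial in
lemma rep3 {k : Type*} [Field k] (ω : k) (a b c : k) :
    algebraMap k (L3 k ω) a + algebraMap k (L3 k ω) b * AdjoinRoot.root (X ^ 3 - C ω)
      + algebraMap k (L3 k ω) c * AdjoinRoot.root (X ^ 3 - C ω) ^ 2
    = (B3 ω).equivFun.symm ![a, b, c] := by
  rw [Module.Basis.equivFun_symm_apply, Fin.sum_univ_three, B3_apply, B3_apply, B3_apply]
  simp [Algebra.smul_def]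

open Polynomial in
lemma uniqrep3 {k : Type*} [Field k] (ω : k) (x : L3 k ω) :
    ∃! abc : k × k × k,
      x = algebraMap k (L3 k ω) abc.1
        + algebraMap k (L3 k ω) abc.2.1 * AdjoinRoot.root (X ^ 3 - C ω)
        + algebraMap k (L3 k ω) abc.2.2 * AdjoinRoot.root (X ^ 3 - C ω) ^ 2 := by
  refine ⟨((B3 ω).equivFun x 0, (B3 ω).equivFun x 1, (B3 ω).equivFun x 2), ?_, ?_⟩
  · dsimp only
    rw [rep3]
    have h : ![(B3 ω).equivFun x 0, (B3 ω).equivFun x 1, (B3 ω).equivFun x 2]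
        = (B3 ω).equivFun x := by
      funext i; fin_cases i <;> rfl
    rw [h, LinearEquiv.symm_apply_apply]
  · rintro ⟨a, b, c⟩ h
    dsimp only at h
    rw [rep3] at h
    have h2 : ![a,b,c] = (B3 ω).equivFun x := by
      rw [h, LinearEquiv.apply_symm_apply]
    have h0 := congrFun h2 0
    have h1 := congrFun h2 1
    have h2' := congrFun h2 2
    simp only [Matrix.cons_val_zero, Matrix.cons_val_one, Matrix.head_cons] at h0 h1 h2'
    simp only [Prod.mk.injEq]
    exact ⟨h0, h1, by simpa using h2'⟩

open Polynomial in
set_option maxHeartbeats 1000000 in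
/-- For `p = 3` and `L = k[t]/(t³ - ω)`, the map `(a + bt + ct²)∂ ↦ (b a; -c -b)`
is a linear bijection `Der_k(L) → sl₂(k)` respecting the Lie bracket and the 3-map. -/
theorem stmt7 {k : Type*} [Field k] [CharP k 3] (ω : k)
    (E : Derivation k (L3 k ω) (L3 k ω))
    (hE : E (AdjoinRoot.root (Polynomial.X ^ 3 - Polynomial.C ω)) = 1) :
    (∀ D : Derivation k (L3 k ω) (L3 k ω),
        ∃! abc : k × k × k, D.toLinearMap = D3 ω E abc.1 abc.2.1 abc.2.2) ∧
    (∀ a b c a' b' c' : k, ∃ a'' b'' c'' : k,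
        D3 ω E a b c * D3 ω E a' b' c' - D3 ω E a' b' c' * D3 ω E a b c
          = D3 ω E a'' b'' c'' ∧
        M3 a'' b'' c'' = M3 a b c * M3 a' b' c' - M3 a' b' c' * M3 a b c) ∧
    (∀ a b c : k, ∃ a'' b'' c'' : k,
        D3 ω E a b c ^ 3 = D3 ω E a'' b'' c'' ∧
        M3 a'' b'' c'' = M3 a b c ^ 3) := by
  set r : L3 k ω := AdjoinRoot.root (X ^ 3 - C ω) with hr
  have h3k : (3 : k) = 0 := by exact_mod_cast CharP.cast_eq_zero k 3
  have h3L : (3 : L3 k ω) = 0 := by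
    rw [show (3 : L3 k ω) = algebraMap k (L3 k ω) 3 from (map_ofNat _ 3).symm, h3k, map_zero]
  have hroot : r ^ 3 = algebraMap k (L3 k ω) ω := by
    rw [hr, root_X_pow_sub_C_pow]; rfl
  have hEr2 : E (r ^ 2) = -r := by
    rw [pow_two, Derivation.leibniz, hE]
    simp only [smul_eq_mul]
    linear_combination r * h3L
  have hE30 : ∀ z : L3 k ω, E (E (E z)) = 0 := by
    have hcomp : (E.toLinearMap ∘ₗ E.toLinearMap ∘ₗ E.toLinearMap : _) = 0 := by
      apply (B3 ω).ext
      intro i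
      fin_cases i <;>
        simp [B3_apply, hE, hEr2, Derivation.map_one_eq_zero, ← hr]
    intro z
    have := LinearMap.ext_iff.mp hcomp z
    simpa using this
  refine ⟨?_, ?_, ?_⟩
  · -- part 1
    intro D
    obtain ⟨⟨a, b, c⟩, hx, huniq⟩ := uniqrep3 ω (D r)
    dsimp only at hx
    have hD : D = (D r) • E := by
      apply Derivation.ext_of_adjoin_eq_top {r} AdjoinRoot.adjoinRoot_eq_top
      intro y hy
      rcases hy with rfl
      rw [Derivation.smul_apply, hE, smul_eq_mul, mul_one]
    refine ⟨(a, b, c), ?_, ?_⟩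
    · dsimp only
      rw [hD, Derivation.coe_smul_linearMap, hx, D3]
    · rintro ⟨a', b', c'⟩ h
      dsimp only at h
      have h2 : D r = algebraMap k (L3 k ω) a' + algebraMap k (L3 k ω) b' * r
          + algebraMap k (L3 k ω) c' * r ^ 2 := by
        have := LinearMap.ext_iff.mp h r
        rw [D3] at this
        simpa [hE, smul_eq_mul] using this
      exact huniq (a', b', c') h2
  · -- part 2 : bracket
    intro a b c a' b' c'
    refine ⟨a * b' - a' * b, a' * c - a * c', b * c' - b' * c, ?_, ?_⟩
    · apply LinearMap.ext
      intro z
      simp only [D3, LinearMap.sub_apply, Module.End.mul_apply, LinearMap.smul_apply,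
        smul_eq_mul, Derivation.coeFn_coe, map_add, map_sub, map_mul, map_pow, Derivation.leibniz,
        Derivation.map_algebraMap, hE, hEr2, map_neg, map_zero, map_one,
        Derivation.map_one_eq_zero, ← hr]
      linear_combination ((algebraMap k (L3 k ω) b' * algebraMap k (L3 k ω) c
        - algebraMap k (L3 k ω) b * algebraMap k (L3 k ω) c') * r ^ 2 * E z) * h3L
    · ext i j
      fin_cases i <;> fin_cases j
      · simp [M3, Matrix.mul_fin_two]; ring
      · simp [M3, Matrix.mul_fin_two]; linear_combination (a * b' - a' * b) * h3k
      · simp [M3, Matrix.mul_fin_two]; linear_combination (b' * c - b * c') * h3k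
      · simp [M3, Matrix.mul_fin_two]; ring
  · -- part 3 : cube
    intro a b c
    refine ⟨a * b ^ 2 - a ^ 2 * c, b ^ 3 - a * b * c, b ^ 2 * c - a * c ^ 2, ?_, ?_⟩
    · apply LinearMap.ext
      intro z
      have hw : E (E (E z)) = 0 := hE30 z
      rw [show D3 ω E a b c ^ 3 = D3 ω E a b c * D3 ω E a b c * D3 ω E a b c from pow_three _]
      simp only [D3, Module.End.mul_apply, LinearMap.smul_apply,
        smul_eq_mul, Derivation.coeFn_coe, map_add, map_sub, map_mul, map_pow, Derivation.leibniz,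
        Derivation.map_algebraMap, hE, hEr2, hw, map_neg, map_zero, map_one,
        Derivation.map_one_eq_zero, ← hr]
      linear_combination
        (((algebraMap k (L3 k ω) a + algebraMap k (L3 k ω) b * r
              + algebraMap k (L3 k ω) c * r ^ 2) ^ 2
            * (algebraMap k (L3 k ω) b - algebraMap k (L3 k ω) c * r) * E (E z))
          - (algebraMap k (L3 k ω) b * algebraMap k (L3 k ω) c ^ 2 * algebraMap k (L3 k ω) ω
              + algebraMap k (L3 k ω) a * algebraMap k (L3 k ω) b * algebraMap k (L3 k ω) c * r
              + algebraMap k (L3 k ω) b ^ 2 * algebraMap k (L3 k ω) c * r ^ 2) * E z) * h3L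
        + (-(3 : L3 k ω) * algebraMap k (L3 k ω) b * algebraMap k (L3 k ω) c ^ 2 * E z) * hroot
    · have hsq : M3 a b c ^ 2 = (b ^ 2 - a * c) • (1 : Matrix (Fin 2) (Fin 2) k) := by
        ext i j
        fin_cases i <;> fin_cases j <;>
          simp [M3, pow_two, Matrix.mul_fin_two, Matrix.one_apply] <;> ring
      rw [show M3 a b c ^ 3 = M3 a b c ^ 2 * M3 a b c from pow_succ _ _, hsq]
      ext i j
      fin_cases i <;> fin_cases j <;>
        simp [M3, Matrix.mul_apply, Fin.sum_univ_two, Matrix.one_apply] <;> ring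
end

section
/- Let k be a field of characteristic p > 0 and let F(s,t) = Σ_{i=1}^{p−1} Σ_{j=0}^{p−1} λ_{ij} s^j t^i ∈ k[s,t] satisfy ∂F/∂s + ∂F/∂t = 0. Then F = 0, i.e., all coefficients λ_{ij} vanish. -/
open MvPolynomial

lemma aux_pair_eq9 (a b c d : ℕ) :
    Finsupp.single (0:Fin 2) a + Finsupp.single 1 b = Finsupp.single 0 c + Finsupp.single 1 d ↔ a = c ∧ b = d := by
  constructor
  · intro h
    constructor
    · have := DFunLike.congr_fun h 0; simpa using this
    · have := DFunLike.congr_fun h 1; simpa using this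
  · rintro ⟨rfl, rfl⟩; rfl

lemma aux_sub09 (j i : ℕ) : (Finsupp.single (0:Fin 2) j + Finsupp.single 1 i) - Finsupp.single 0 1 = Finsupp.single 0 (j-1) + Finsupp.single 1 i := by
  ext x; fin_cases x <;> simp [Finsupp.tsub_apply, Finsupp.single_apply]

lemma aux_sub19 (j i : ℕ) : (Finsupp.single (0:Fin 2) j + Finsupp.single 1 i) - Finsupp.single 1 1 = Finsupp.single 0 j + Finsupp.single 1 (i-1) := by
  ext x; fin_cases x <;> simp [Finsupp.tsub_apply, Finsupp.single_apply]

lemma aux_app09 (j i : ℕ) : ((Finsupp.single (0:Fin 2) j + Finsupp.single 1 i) : Fin 2 →₀ ℕ) 0 = j := by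
  simp [Finsupp.single_apply]

lemma aux_app19 (j i : ℕ) : ((Finsupp.single (0:Fin 2) j + Finsupp.single 1 i) : Fin 2 →₀ ℕ) 1 = i := by
  simp [Finsupp.single_apply]

open MvPolynomial in
/-- Let `F(s,t) = Σ_{i=1}^{p-1} Σ_{j=0}^{p-1} λ_{ij} s^j t^i` (here `s = X 0`, `t = X 1`)
be a polynomial over a field of characteristic `p` with `∂F/∂s + ∂F/∂t = 0`.
Then all coefficients `λ_{ij}` vanish. -/
theorem stmt9 {k : Type*} [Field k] (p : ℕ) [Fact p.Prime] [CharP k p]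
    (lam : ℕ → ℕ → k) (F : MvPolynomial (Fin 2) k)
    (hF : F = ∑ i ∈ Finset.Ico 1 p, ∑ j ∈ Finset.range p,
      MvPolynomial.C (lam i j) * MvPolynomial.X 0 ^ j * MvPolynomial.X 1 ^ i)
    (hd : MvPolynomial.pderiv 0 F + MvPolynomial.pderiv 1 F = 0) :
    ∀ i ∈ Finset.Ico 1 p, ∀ j ∈ Finset.range p, lam i j = 0 := by
  have hp2 : 2 ≤ p := (Fact.out : p.Prime).two_le
  have hF' : F = ∑ i ∈ Finset.Ico 1 p, ∑ j ∈ Finset.range p,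
      monomial (Finsupp.single 0 j + Finsupp.single 1 i) (lam i j) := by
    rw [hF]
    refine Finset.sum_congr rfl fun i _ => Finset.sum_congr rfl fun j _ => ?_
    rw [X_pow_eq_monomial, X_pow_eq_monomial, C_apply, monomial_mul, monomial_mul]
    simp
  have h0 : ∀ a b : ℕ, coeff (Finsupp.single 0 a + Finsupp.single 1 b) (pderiv 0 F)
      = if 1 ≤ b ∧ b < p ∧ a + 1 < p then lam b (a+1) * ((a+1 : ℕ) : k) else 0 := by
    intro a b
    rw [hF', map_sum]
    simp only [map_sum, pderiv_monomial, aux_sub09, aux_app09]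
    rw [MvPolynomial.coeff_sum]
    simp only [MvPolynomial.coeff_sum, coeff_monomial, aux_pair_eq9]
    simp only [and_comm (a := _ = a), ite_and]
    rw [Finset.sum_comm]
    simp only [Finset.sum_ite_eq', Finset.mem_Ico]
    by_cases hb : 1 ≤ b ∧ b < p
    · simp only [hb, if_true, hb.1, hb.2, true_and]
      by_cases ha : a + 1 < p
      · rw [if_pos ha, Finset.sum_eq_single (a+1)]
        · simp
        · intro y hy hne
          by_cases h : y - 1 = a
          · have hy0 : y = 0 := by omega
            have ha0 : a = 0 := by omega
            subst hy0; simp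
          · simp [h]
        · intro h; exact absurd (Finset.mem_range.mpr ha) h
      · rw [if_neg ha, Finset.sum_eq_zero]
        intro y hy
        rw [if_neg]
        have := Finset.mem_range.mp hy
        omega
    · refine (Finset.sum_eq_zero fun x _ => if_neg hb).trans ?_
      by_cases h1b : 1 ≤ b
      · rw [if_pos h1b, if_neg (by omega)]
      · rw [if_neg h1b]
  have h1 : ∀ a b : ℕ, coeff (Finsupp.single 0 a + Finsupp.single 1 b) (pderiv 1 F)
      = if b + 1 < p ∧ a < p then lam (b+1) a * ((b+1 : ℕ) : k) else 0 := by
    intro a b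
    rw [hF', map_sum]
    simp only [map_sum, pderiv_monomial, aux_sub19, aux_app19]
    rw [MvPolynomial.coeff_sum]
    simp only [MvPolynomial.coeff_sum, coeff_monomial, aux_pair_eq9]
    simp only [ite_and, Finset.sum_ite_eq', Finset.mem_range]
    by_cases ha : a < p
    · simp only [ha, if_true, and_true]
      by_cases hb : b + 1 < p
      · rw [if_pos hb, Finset.sum_eq_single (b+1)]
        · simp
        · intro i hi hne
          rw [if_neg]
          have := Finset.mem_Ico.mp hi
          omega
        · intro h
          exact absurd (Finset.mem_Ico.mpr ⟨by omega, hb⟩) h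
      · rw [if_neg hb, Finset.sum_eq_zero]
        intro i hi
        rw [if_neg]
        have := Finset.mem_Ico.mp hi
        omega
    · simp [ha]
  have key : ∀ a b : ℕ,
      (if 1 ≤ b ∧ b < p ∧ a + 1 < p then lam b (a+1) * ((a+1 : ℕ) : k) else 0)
      + (if b + 1 < p ∧ a < p then lam (b+1) a * ((b+1 : ℕ) : k) else 0) = 0 := by
    intro a b
    have := congrArg (coeff (Finsupp.single 0 a + Finsupp.single 1 b)) hd
    rwa [MvPolynomial.coeff_add, h0, h1, coeff_zero] at this
  have main : ∀ i, 1 ≤ i → i < p → ∀ j, j < p → lam i j = 0 := by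
    intro i hi1
    induction i, hi1 using Nat.le_induction with
    | base =>
      intro _ j hj
      have := key j 0
      simp only [Nat.lt_irrefl, Nat.le_zero] at this
      rw [if_neg (by omega), zero_add, if_pos ⟨by omega, hj⟩] at this
      have hcast : ((0 + 1 : ℕ) : k) ≠ 0 := by norm_num
      exact (mul_eq_zero.mp this).resolve_right hcast
    | succ i hi ih =>
      intro hip j hj
      have := key j i
      have hfirst : (if 1 ≤ i ∧ i < p ∧ j + 1 < p then lam i (j+1) * ((j+1 : ℕ) : k) else 0) = 0 := by
        by_cases h : 1 ≤ i ∧ i < p ∧ j + 1 < p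
        · rw [if_pos h, ih h.2.1 (j+1) h.2.2, zero_mul]
        · exact if_neg h
      rw [hfirst, zero_add, if_pos ⟨hip, hj⟩] at this
      have hcast : ((i + 1 : ℕ) : k) ≠ 0 := by
        intro hz
        rw [CharP.cast_eq_zero_iff k p] at hz
        exact Nat.not_dvd_of_pos_of_lt (by omega) (by omega) hz
      exact (mul_eq_zero.mp this).resolve_right hcast
  intro i hi j hj
  have hi' := Finset.mem_Ico.mp hi
  exact main i hi'.1 hi'.2 j (Finset.mem_range.mp hj)
end

section
/- Let k be a field of characteristic p, L = k[t]/(t^p − ω), and let g ∈ Aut_k(L) with inverse corresponding to the substitution t ↦ φ(t). Then the formal derivative φ'(t) is a unit in L, and the adjoint action on a derivation f(t)∂ is given by Ad_g(f(t)∂) = (f(φ(t))/φ'(t))·∂. -/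
/-- `L = k[t]/(t^p - ω)`. -/
noncomputable abbrev Lp (k : Type*) [Field k] (p : ℕ) (ω : k) : Type _ :=
  AdjoinRoot (Polynomial.X ^ p - Polynomial.C ω)

/-- Conjugation of a derivation by an algebra automorphism is a derivation. -/
def conjDer {k L : Type*} [CommRing k] [CommRing L] [Algebra k L]
    (g : L ≃ₐ[k] L) (D : Derivation k L L) : Derivation k L L where
  toLinearMap := g.symm.toLinearMap ∘ₗ D.toLinearMap ∘ₗ g.toLinearMap
  map_one_eq_zero' := by simp
  leibniz' a b := by
    simp [Derivation.leibniz, smul_eq_mul, map_mul, map_add]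

@[simp] lemma conjDer_apply {k L : Type*} [CommRing k] [CommRing L] [Algebra k L]
    (g : L ≃ₐ[k] L) (D : Derivation k L L) (x : L) :
    conjDer g D x = g.symm (D (g x)) := rfl

lemma der_ext_root {k : Type*} [Field k] {f : Polynomial k}
    {D1 D2 : Derivation k (AdjoinRoot f) (AdjoinRoot f)}
    (h : D1 (AdjoinRoot.root f) = D2 (AdjoinRoot.root f)) : D1 = D2 := by
  ext x
  have h' := Derivation.eqOn_adjoin (R := k) (Set.eqOn_singleton.2 h)
  rw [AdjoinRoot.adjoinRoot_eq_top] at h'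
  exact h' (by trivial)

set_option maxHeartbeats 1000000 in
/-- Let `g` be a `k`-algebra automorphism of `L = k[t]/(t^p - ω)` whose inverse is
the substitution `t ↦ φ(t)`, and let `∂ = E` be the derivation with `∂(t) = 1`.
Then `φ'(t)` is a unit in `L`, and for any derivation `D = f∂` (so `f = D t`),
the adjoint action is `Ad_g(D) = g⁻¹ ∘ D ∘ g = (f(φ(t))/φ'(t)) ∂`, where
`f(φ(t)) = g⁻¹(f)` and `u` denotes the inverse of `φ'(t)`. -/
theorem stmt10 {k : Type*} [Field k] (p : ℕ) [Fact p.Prime] [CharP k p] (ω : k)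
    (g : Lp k p ω ≃ₐ[k] Lp k p ω) (φ : Polynomial k)
    (hφ : AdjoinRoot.mk (Polynomial.X ^ p - Polynomial.C ω) φ
      = g.symm (AdjoinRoot.root (Polynomial.X ^ p - Polynomial.C ω)))
    (E : Derivation k (Lp k p ω) (Lp k p ω))
    (hE : E (AdjoinRoot.root (Polynomial.X ^ p - Polynomial.C ω)) = 1) :
    IsUnit (AdjoinRoot.mk (Polynomial.X ^ p - Polynomial.C ω)
      (Polynomial.derivative φ)) ∧
    ∀ (D : Derivation k (Lp k p ω) (Lp k p ω)) (u : Lp k p ω),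
      AdjoinRoot.mk (Polynomial.X ^ p - Polynomial.C ω) (Polynomial.derivative φ) * u
        = 1 →
      (g.symm.toLinearMap ∘ₗ D.toLinearMap ∘ₗ g.toLinearMap : Lp k p ω →ₗ[k] Lp k p ω)
        = (g.symm (D (AdjoinRoot.root (Polynomial.X ^ p - Polynomial.C ω))) * u)
            • E.toLinearMap := by
  set q : Polynomial k := Polynomial.X ^ p - Polynomial.C ω with hq
  set r : Lp k p ω := AdjoinRoot.root q with hr
  set D₀ : Derivation k (Lp k p ω) (Lp k p ω) := conjDer g E with hD₀
  -- chain rule: 1 = φ'(r) * D₀ r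
  have hchain : AdjoinRoot.mk q (Polynomial.derivative φ) * D₀ r = 1 := by
    have h1 : D₀ (AdjoinRoot.mk q φ) = 1 := by
      rw [hφ]
      simp [hD₀, conjDer_apply, hE]
    have h2 : D₀ (AdjoinRoot.mk q φ) =
        AdjoinRoot.mk q (Polynomial.derivative φ) * D₀ r := by
      rw [← AdjoinRoot.aeval_eq, Derivation.comp_aeval_eq, AdjoinRoot.aeval_eq,
        smul_eq_mul]
    rw [← h2, h1]
  refine ⟨IsUnit.of_mul_eq_one _ hchain, ?_⟩
  intro D u hu
  have hu' : u = D₀ r := by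
    calc u = 1 * u := (one_mul u).symm
    _ = (AdjoinRoot.mk q (Polynomial.derivative φ) * D₀ r) * u := by rw [hchain]
    _ = (AdjoinRoot.mk q (Polynomial.derivative φ) * u) * D₀ r := by ring
    _ = D₀ r := by rw [hu, one_mul]
  -- D = (D r) • E
  have hD : D = (D r) • E := by
    apply der_ext_root
    show D r = D r * E r
    simp [hE]
  have key : conjDer g D = (g.symm (D r) * u) • E := by
    apply der_ext_root
    have : D (g r) = D r * E (g r) := by
      conv_lhs => rw [hD]
      simp
    show conjDer g D r = ((g.symm (D r) * u) • E) r
    simp only [conjDer_apply, Derivation.smul_apply, smul_eq_mul, hE, mul_one, this,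
      map_mul]
    rw [hu']
    simp [hD₀]
  have := congrArg Derivation.toLinearMap key
  exact this
end

section
/- Let A = k[[x,y,z]] be a formal power series ring over a field k, and let f ∈ A be irreducible with f ≡ x_0 y_0 + λ z_0^2 mod m^3 for some regular system of parameters x_0, y_0, z_0 and some λ ∈ k. Then there exists a regular system of parameters x, y, z with (f) = (xy + z^n) for some n ≥ 2. -/
/-- A regular system of parameters of `A = k[[x,y,z]]`: a triple generating the
maximal ideal. -/
def IsRegSys {k : Type*} [Field k] (v : Fin 3 → MvPowerSeries (Fin 3) k) : Prop :=
  Ideal.span (Set.range v) = IsLocalRing.maximalIdeal (MvPowerSeries (Fin 3) k)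

open MvPowerSeries IsLocalRing

set_option linter.unusedTactic false
set_option linter.unreachableTactic false
set_option linter.unnecessarySimpa false

noncomputable section Stmt13Aux

variable {k : Type*} [Field k]


/-- degree of a monomial exponent -/
def dg (d : Fin 3 →₀ ℕ) : ℕ := ∑ i, d i

lemma dg_add (a b : Fin 3 →₀ ℕ) : dg (a + b) = dg a + dg b := by
  simp [dg, Finsupp.add_apply, Finset.sum_add_distrib]

lemma dg_eq_zero {d : Fin 3 →₀ ℕ} : dg d = 0 ↔ d = 0 := by
  simp [dg, Finset.sum_eq_zero_iff, Finsupp.ext_iff]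

lemma dg_single (i : Fin 3) (n : ℕ) : dg (Finsupp.single i n) = n := by
  simp [dg, Finsupp.single_apply]

/-- the ideal of power series whose coefficients vanish below degree `N` -/
def JJ (k : Type*) [Field k] (N : ℕ) : Ideal (MvPowerSeries (Fin 3) k) where
  carrier := {r | ∀ d : Fin 3 →₀ ℕ, dg d < N → MvPowerSeries.coeff d r = 0}
  add_mem' := by
    intro a b ha hb d hd
    rw [map_add, ha d hd, hb d hd, add_zero]
  zero_mem' := by intro d _; simp
  smul_mem' := by
    classical
    intro c x hx d hd
    rw [smul_eq_mul, MvPowerSeries.coeff_mul]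
    refine Finset.sum_eq_zero fun p hp => ?_
    rw [Finset.HasAntidiagonal.mem_antidiagonal] at hp
    have : dg p.2 ≤ dg d := by rw [← hp, dg_add]; omega
    rw [hx p.2 (lt_of_le_of_lt this hd), mul_zero]

lemma mem_JJ {N : ℕ} {r : MvPowerSeries (Fin 3) k} :
    r ∈ JJ k N ↔ ∀ d : Fin 3 →₀ ℕ, dg d < N → MvPowerSeries.coeff d r = 0 := Iff.rfl

lemma JJ_antitone {M N : ℕ} (h : M ≤ N) : JJ k N ≤ JJ k M :=
  fun _ hr d hd => hr d (lt_of_lt_of_le hd h)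

lemma JJ_mul_mem {M N : ℕ} {r s : MvPowerSeries (Fin 3) k} (hr : r ∈ JJ k M) (hs : s ∈ JJ k N) :
    r * s ∈ JJ k (M + N) := by
  classical
  intro d hd
  rw [MvPowerSeries.coeff_mul]
  refine Finset.sum_eq_zero fun p hp => ?_
  rw [Finset.HasAntidiagonal.mem_antidiagonal] at hp
  have hdg : dg p.1 + dg p.2 = dg d := by rw [← hp, dg_add]
  by_cases h1 : dg p.1 < M
  · rw [hr p.1 h1, zero_mul]
  · rw [hs p.2 (by omega), mul_zero]

lemma JJ_zero_eq_top : JJ k 0 = ⊤ := by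
  ext r; simp [mem_JJ]

lemma mem_JJ_one {r : MvPowerSeries (Fin 3) k} :
    r ∈ JJ k 1 ↔ MvPowerSeries.constantCoeff (σ := Fin 3) (R := k) r = 0 := by
  constructor
  · intro h
    have := h 0 (by simp [dg])
    simpa [MvPowerSeries.coeff_zero_eq_constantCoeff] using this
  · intro h d hd
    have : d = 0 := dg_eq_zero.mp (by omega)
    rw [this, MvPowerSeries.coeff_zero_eq_constantCoeff]; exact h

lemma maximalIdeal_eq_JJ_one :
    maximalIdeal (MvPowerSeries (Fin 3) k) = JJ k 1 := by
  ext r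
  rw [mem_maximalIdeal, mem_nonunits_iff, mem_JJ_one, MvPowerSeries.isUnit_iff_constantCoeff,
    isUnit_iff_ne_zero, not_ne_iff]

lemma pow_maximalIdeal_le_JJ (N : ℕ) :
    (maximalIdeal (MvPowerSeries (Fin 3) k)) ^ N ≤ JJ k N := by
  induction N with
  | zero => simp [JJ_zero_eq_top]
  | succ n ih =>
    rw [pow_succ]
    intro r hr
    refine Submodule.mul_induction_on hr (fun a ha b hb => ?_) (fun x y hx hy => add_mem hx hy)
    have ha' : a ∈ JJ k n := ih ha
    have hb' : b ∈ JJ k 1 := maximalIdeal_eq_JJ_one.le hb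
    exact JJ_mul_mem ha' hb'



open scoped Classical in
/-- division of a power series: the part whose monomials have least variable `i`, divided by `X i` -/
def qdiv (r : MvPowerSeries (Fin 3) k) (i : Fin 3) : MvPowerSeries (Fin 3) k :=
  fun d => if (∀ j, j < i → d j = 0) then MvPowerSeries.coeff (d + Finsupp.single i 1) r else 0

lemma coeff_qdiv (r : MvPowerSeries (Fin 3) k) (i : Fin 3) (d : Fin 3 →₀ ℕ) :
    MvPowerSeries.coeff d (qdiv r i) =
      if (∀ j, j < i → d j = 0) then MvPowerSeries.coeff (d + Finsupp.single i 1) r else 0 := by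
  classical
  rw [MvPowerSeries.coeff_apply]
  simp [qdiv]

lemma coeff_X_mul_qdiv (r : MvPowerSeries (Fin 3) k) (i : Fin 3) (e : Fin 3 →₀ ℕ) :
    MvPowerSeries.coeff e (MvPowerSeries.X i * qdiv r i) =
      if (1 ≤ e i ∧ ∀ j, j < i → e j = 0) then MvPowerSeries.coeff e r else 0 := by
  classical
  have hX : (MvPowerSeries.X i : MvPowerSeries (Fin 3) k) =
      MvPowerSeries.monomial (Finsupp.single i 1) 1 := rfl
  rw [hX, MvPowerSeries.coeff_monomial_mul]
  by_cases hle : Finsupp.single i 1 ≤ e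
  · have hei : 1 ≤ e i := (Finsupp.single_le_iff).mp hle
    rw [if_pos hle, one_mul, coeff_qdiv]
    have hsub : ∀ j, j ≠ i → ((e - Finsupp.single i 1) : Fin 3 →₀ ℕ) j = e j := by
      intro j hj
      rw [Finsupp.tsub_apply, Finsupp.single_apply, if_neg (fun h => hj h.symm), Nat.sub_zero]
    have hcan : e - Finsupp.single i 1 + Finsupp.single i 1 = e := tsub_add_cancel_of_le hle
    by_cases hcond : ∀ j, j < i → e j = 0
    · rw [if_pos (fun j hj => by rw [hsub j (ne_of_lt hj)]; exact hcond j hj), hcan,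
        if_pos ⟨hei, hcond⟩]
    · rw [if_neg (fun h => hcond (fun j hj => by rw [← hsub j (ne_of_lt hj)]; exact h j hj)),
        if_neg (fun h => hcond h.2)]
  · rw [if_neg hle, if_neg]
    intro h
    exact hle (Finsupp.single_le_iff.mpr h.1)

lemma sum_X_mul_qdiv (r : MvPowerSeries (Fin 3) k)
    (h0 : MvPowerSeries.constantCoeff (σ := Fin 3) (R := k) r = 0) :
    ∑ i : Fin 3, MvPowerSeries.X i * qdiv r i = r := by
  classical
  apply MvPowerSeries.ext
  intro e
  rw [map_sum, Fin.sum_univ_three]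
  rw [coeff_X_mul_qdiv, coeff_X_mul_qdiv, coeff_X_mul_qdiv]
  have h20 : ((2:Fin 3) = 0) = False := by simp
  by_cases h0e : e 0 ≥ 1
  · rw [if_pos ⟨h0e, fun j hj => absurd hj (Fin.not_lt_zero j)⟩, if_neg, if_neg]
    · ring
    · rintro ⟨-, h⟩
      have := h 0 (by decide)
      omega
    · rintro ⟨-, h⟩
      have := h 0 (by decide)
      omega
  · have he0 : e 0 = 0 := by omega
    by_cases h1e : e 1 ≥ 1
    · rw [if_neg (by omega), if_pos, if_neg]
      · ring
      · rintro ⟨-, h⟩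
        have := h 1 (by decide)
        omega
      · refine ⟨h1e, fun j hj => ?_⟩
        have : j = 0 := by
          have := hj
          fin_cases j <;> simp_all <;> omega
        rw [this, he0]
    · have he1 : e 1 = 0 := by omega
      by_cases h2e : e 2 ≥ 1
      · rw [if_neg (by omega), if_neg (by omega), if_pos]
        · ring
        · refine ⟨h2e, fun j hj => ?_⟩
          fin_cases j
          · exact he0
          · exact he1
          · exact absurd hj (by simp)
      · have he2 : e 2 = 0 := by omega
        have : e = 0 := by
          ext j
          fin_cases j <;> assumption
        rw [if_neg (by omega), if_neg (by omega), if_neg (by omega), this]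
        simp only [MvPowerSeries.coeff_zero_eq_constantCoeff]
        rw [h0]
        ring



lemma qdiv_mem_JJ {N : ℕ} {r : MvPowerSeries (Fin 3) k} (hr : r ∈ JJ k (N + 1)) (i : Fin 3) :
    qdiv r i ∈ JJ k N := by
  rw [mem_JJ]
  intro d hd
  rw [coeff_qdiv]
  split
  · exact mem_JJ.mp hr _ (by rw [dg_add, dg_single]; omega)
  · rfl

lemma JJ_le_pow (N : ℕ) :
    JJ k N ≤ (maximalIdeal (MvPowerSeries (Fin 3) k)) ^ N := by
  induction N with
  | zero => rw [pow_zero, Ideal.one_eq_top]; exact le_top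
  | succ n ih =>
    intro r hr
    have h0 : MvPowerSeries.constantCoeff (σ := Fin 3) (R := k) r = 0 :=
      mem_JJ_one.mp (JJ_antitone (by omega) hr)
    rw [← sum_X_mul_qdiv r h0, pow_succ']
    refine Ideal.sum_mem _ fun i _ => Ideal.mul_mem_mul ?_ (ih (qdiv_mem_JJ hr i))
    rw [maximalIdeal_eq_JJ_one, mem_JJ_one, MvPowerSeries.constantCoeff_X]

lemma JJ_sub_of_le {s : ℕ → MvPowerSeries (Fin 3) k}
    (hs : ∀ N, s (N + 1) - s N ∈ JJ k N) {M N : ℕ} (h : M ≤ N) : s N - s M ∈ JJ k M := by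
  induction N with
  | zero =>
    have : M = 0 := by omega
    subst this; simp [JJ_zero_eq_top]
  | succ n ih =>
    rcases Nat.eq_or_lt_of_le h with h' | h'
    · rw [← h']; simpa using (Ideal.zero_mem _)
    · have hM : M ≤ n := by omega
      have : s (n + 1) - s M = (s (n + 1) - s n) + (s n - s M) := by ring
      rw [this]
      exact add_mem (JJ_antitone hM (hs n)) (ih hM)

lemma exists_limit (s : ℕ → MvPowerSeries (Fin 3) k)
    (hs : ∀ N, s (N + 1) - s N ∈ JJ k N) :
    ∃ L : MvPowerSeries (Fin 3) k, ∀ N, L - s N ∈ JJ k N := by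
  refine ⟨(fun d => MvPowerSeries.coeff d (s (dg d + 1)) : (Fin 3 →₀ ℕ) → k), ?_⟩
  intro N
  rw [mem_JJ]
  intro d hd
  have hL : MvPowerSeries.coeff d
      ((fun d => MvPowerSeries.coeff d (s (dg d + 1)) : (Fin 3 →₀ ℕ) → k) :
        MvPowerSeries (Fin 3) k) = MvPowerSeries.coeff d (s (dg d + 1)) := by
    rw [MvPowerSeries.coeff_apply]
    rfl
  erw [map_sub, hL]
  have := mem_JJ.mp (JJ_sub_of_le hs (show dg d + 1 ≤ N by omega)) d (by omega)
  rw [map_sub] at this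
  rw [sub_eq_zero] at this ⊢
  exact this.symm
  


local notation "MM" => maximalIdeal (MvPowerSeries (Fin 3) k)
local notation "CC" => MvPowerSeries.C (σ := Fin 3) (R := k)

lemma mem_pow_succ {a : ℕ} {x y : MvPowerSeries (Fin 3) k} (hx : x ∈ MM ^ a) (hy : y ∈ MM) :
    x * y ∈ MM ^ (a + 1) := by
  rw [pow_succ]; exact Ideal.mul_mem_mul hx hy

lemma decomp0 (r : MvPowerSeries (Fin 3) k) :
    ∃ (c : k) (γ : MvPowerSeries (Fin 3) k), γ ∈ MM ∧ r = CC c + γ := by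
  refine ⟨MvPowerSeries.constantCoeff (σ := Fin 3) (R := k) r, r - CC (MvPowerSeries.constantCoeff (σ := Fin 3) (R := k) r),
    ?_, by ring⟩
  rw [mem_maximalIdeal, mem_nonunits_iff, MvPowerSeries.isUnit_iff_constantCoeff]
  simp

variable {v : Fin 3 → MvPowerSeries (Fin 3) k}
  (hv : Ideal.span (Set.range v) = maximalIdeal (MvPowerSeries (Fin 3) k))

include hv in
lemma decompM {r : MvPowerSeries (Fin 3) k} (hr : r ∈ MM) :
    ∃ e : Fin 3 → MvPowerSeries (Fin 3) k, r = ∑ i, e i * v i := by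
  rw [← hv] at hr
  obtain ⟨e, he⟩ := Ideal.mem_span_range_iff_exists_fun.mp hr
  exact ⟨e, he.symm⟩

include hv in
lemma decompPow (i : ℕ) :
    ∀ r ∈ MM ^ (i + 1), ∃ (α β : MvPowerSeries (Fin 3) k) (c : k)
      (γ : MvPowerSeries (Fin 3) k), α ∈ MM ^ i ∧ β ∈ MM ^ i ∧ γ ∈ MM ^ (i + 2) ∧
      r = α * v 0 + β * v 1 + CC c * v 2 ^ (i + 1) + γ := by
  induction i with
  | zero =>
    intro r hr
    rw [pow_one] at hr
    obtain ⟨e, he⟩ := decompM hv hr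
    obtain ⟨c, δ, hδ, he2⟩ := decomp0 (e 2)
    have hv2 : v 2 ∈ MM := by rw [← hv]; exact Ideal.subset_span ⟨2, rfl⟩
    refine ⟨e 0, e 1, c, δ * v 2, by simp, by simp, ?_, ?_⟩
    · have : δ * v 2 ∈ MM * MM := Ideal.mul_mem_mul hδ hv2
      rwa [← pow_two] at this
    · rw [he, Fin.sum_univ_three, he2]; ring
  | succ n ih =>
    intro r hr
    rw [pow_succ'] at hr
    refine Submodule.mul_induction_on hr ?_ ?_
    · intro t ht s hs
      obtain ⟨α, β, c, γ, hα, hβ, hγ, hsum⟩ := ih s hs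
      obtain ⟨e, he⟩ := decompM hv ht
      obtain ⟨ct, δ, hδ, he2⟩ := decomp0 (e 2)
      have hv2 : v 2 ∈ MM := by rw [← hv]; exact Ideal.subset_span ⟨2, rfl⟩
      refine ⟨e 0 * s + e 2 * (v 2 * α), e 1 * s + e 2 * (v 2 * β), ct * c,
        δ * CC c * v 2 ^ (n + 2) + e 2 * (v 2 * γ), ?_, ?_, ?_, ?_⟩
      · exact add_mem (Ideal.mul_mem_left _ _ hs)
          (Ideal.mul_mem_left _ _ (by rw [mul_comm]; exact mem_pow_succ hα hv2))
      · exact add_mem (Ideal.mul_mem_left _ _ hs)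
          (Ideal.mul_mem_left _ _ (by rw [mul_comm]; exact mem_pow_succ hβ hv2))
      · refine add_mem ?_ (Ideal.mul_mem_left _ _ (by rw [mul_comm]; exact mem_pow_succ hγ hv2))
        have h1 : v 2 ^ (n + 2) ∈ MM ^ (n + 2) := Ideal.pow_mem_pow hv2 _
        have h2 : v 2 ^ (n + 2) * (δ * CC c) ∈ MM ^ (n + 2) * MM :=
          Ideal.mul_mem_mul h1 (Ideal.mul_mem_right _ _ hδ)
        rw [← pow_succ] at h2
        have : δ * CC c * v 2 ^ (n + 2) = v 2 ^ (n + 2) * (δ * CC c) := by ring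
        rw [this]
        exact Ideal.pow_le_pow_right (by omega) h2
      · rw [he, Fin.sum_univ_three, he2, hsum, map_mul]; ring
    · intro x y hx hy
      obtain ⟨α1, β1, c1, γ1, h1, h2, h3, h4⟩ := hx
      obtain ⟨α2, β2, c2, γ2, h5, h6, h7, h8⟩ := hy
      exact ⟨α1 + α2, β1 + β2, c1 + c2, γ1 + γ2, add_mem h1 h5, add_mem h2 h6, add_mem h3 h7,
        by rw [h4, h8, map_add]; ring⟩


section Iteration

/-- partial sums of the series in `v 2` -/
def GG (vv : Fin 3 → MvPowerSeries (Fin 3) k) (c : ℕ → k) (N : ℕ) : MvPowerSeries (Fin 3) k :=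
  ∑ j ∈ Finset.range N, CC (c j) * vv 2 ^ j

/-- invariant of the approximation process at stage `N` -/
def InvP (ff : MvPowerSeries (Fin 3) k) (vv : Fin 3 → MvPowerSeries (Fin 3) k) (N : ℕ)
    (x : MvPowerSeries (Fin 3) k × MvPowerSeries (Fin 3) k × (ℕ → k)) : Prop :=
  (x.1 - vv 0 ∈ MM ^ 2) ∧ (x.2.1 - vv 1 ∈ MM ^ 2) ∧ (∀ j, j < 2 → x.2.2 j = 0) ∧
  (∀ j, N ≤ j → x.2.2 j = 0) ∧ (ff - (x.1 * x.2.1 + GG vv x.2.2 N) ∈ MM ^ N)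

lemma mem_pow_mul {a b : ℕ} {x y : MvPowerSeries (Fin 3) k}
    (hx : x ∈ MM ^ a) (hy : y ∈ MM ^ b) : x * y ∈ MM ^ (a + b) := by
  rw [pow_add]; exact Ideal.mul_mem_mul hx hy

variable (f : MvPowerSeries (Fin 3) k)

include hv in
lemma step (n : ℕ) (x) (h : InvP f v (n + 3) x) :
    ∃ y, InvP f v (n + 4) y ∧ (y.1 - x.1 ∈ MM ^ (n + 2)) ∧ (y.2.1 - x.2.1 ∈ MM ^ (n + 2)) ∧
      ∀ j, j < n + 3 → y.2.2 j = x.2.2 j := by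
  obtain ⟨a, b, c⟩ := x
  obtain ⟨ha, hb, hc2, hcN, hr⟩ := h
  dsimp only at ha hb hc2 hcN hr
  obtain ⟨α, β, c', γ, hα, hβ, hγ, hsum⟩ := decompPow hv (n + 2) _ hr
  refine ⟨(a + β, b + α, Function.update c (n + 3) c'), ⟨?_, ?_, ?_, ?_, ?_⟩, ?_, ?_, ?_⟩
  · dsimp only
    have : a + β - v 0 = (a - v 0) + β := by ring
    rw [this]
    exact add_mem ha (Ideal.pow_le_pow_right (by omega) hβ)
  · dsimp only
    have : b + α - v 1 = (b - v 1) + α := by ring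
    rw [this]
    exact add_mem hb (Ideal.pow_le_pow_right (by omega) hα)
  · intro j hj
    dsimp only
    rw [Function.update_of_ne (by omega)]
    exact hc2 j hj
  · intro j hj
    dsimp only
    rcases eq_or_ne j (n + 3) with rfl | hne
    · omega
    · rw [Function.update_of_ne hne]
      exact hcN j (by omega)
  · -- new error term
    dsimp only
    have hGsucc : GG v (Function.update c (n + 3) c') (n + 4) =
        GG v c (n + 3) + CC c' * v 2 ^ (n + 3) := by
      rw [GG, Finset.sum_range_succ, Function.update_self]
      congr 1
      refine Finset.sum_congr rfl fun j hj => ?_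
      rw [Finset.mem_range] at hj
      rw [Function.update_of_ne (by omega)]
    have key : f - ((a + β) * (b + α) + GG v (Function.update c (n + 3) c') (n + 4)) =
        α * (v 0 - a) + β * (v 1 - b) + γ - β * α := by
      rw [hGsucc]
      linear_combination hsum
    rw [key]
    have h1 : α * (v 0 - a) ∈ MM ^ (n + 4) := by
      have h4 : (n + 4) = (n + 2) + 2 := by omega
      rw [h4]
      exact mem_pow_mul hα (by simpa using neg_mem ha)
    have h2 : β * (v 1 - b) ∈ MM ^ (n + 4) := by
      have h4 : (n + 4) = (n + 2) + 2 := by omega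
      rw [h4]
      exact mem_pow_mul hβ (by simpa using neg_mem hb)
    have h3 : β * α ∈ MM ^ (n + 4) :=
      Ideal.pow_le_pow_right (by omega) (mem_pow_mul hβ hα)
    exact sub_mem (add_mem (add_mem h1 h2) hγ) h3
  · simpa using hβ
  · simpa using hα
  · intro j hj
    dsimp only
    rw [Function.update_of_ne (by omega)]

variable (lam : k)

/-- the starting coefficient function -/
def cInit : ℕ → k := fun j => if j = 2 then lam else 0

include hv in
lemma base (hcong : f - (v 0 * v 1 + CC lam * v 2 ^ 2) ∈ MM ^ 3) :
    InvP f v 3 (v 0, v 1, cInit lam) := by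
  refine ⟨by simp, by simp, ?_, ?_, ?_⟩
  · intro j hj
    simp only [cInit]
    rw [if_neg (by omega)]
  · intro j hj
    simp only [cInit]
    rw [if_neg (by omega)]
  · have hG : GG v (cInit lam) 3 = CC lam * v 2 ^ 2 := by
      rw [GG, Finset.sum_range_succ, Finset.sum_range_succ, Finset.sum_range_succ,
        Finset.sum_range_zero]
      simp [cInit]
    dsimp only
    rw [hG]
    exact hcong

/-- the sequence of successive approximations -/
noncomputable def seqA (ff : MvPowerSeries (Fin 3) k) (vv : Fin 3 → MvPowerSeries (Fin 3) k)
    (hvv : Ideal.span (Set.range vv) = maximalIdeal (MvPowerSeries (Fin 3) k)) (lm : k)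
    (hcong : ff - (vv 0 * vv 1 + CC lm * vv 2 ^ 2) ∈ MM ^ 3) :
    ∀ n : ℕ, {x : MvPowerSeries (Fin 3) k × MvPowerSeries (Fin 3) k × (ℕ → k) //
      InvP ff vv (n + 3) x}
  | 0 => ⟨(vv 0, vv 1, cInit lm), base (hv := hvv) ff lm hcong⟩
  | n + 1 => ⟨(step (hv := hvv) ff n _ (seqA ff vv hvv lm hcong n).2).choose,
      (step (hv := hvv) ff n _ (seqA ff vv hvv lm hcong n).2).choose_spec.1⟩

lemma seqA_succ_spec (ff : MvPowerSeries (Fin 3) k) (vv : Fin 3 → MvPowerSeries (Fin 3) k)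
    (hvv : Ideal.span (Set.range vv) = maximalIdeal (MvPowerSeries (Fin 3) k)) (lm : k)
    (hcong : ff - (vv 0 * vv 1 + CC lm * vv 2 ^ 2) ∈ MM ^ 3) (n : ℕ) :
    ((seqA ff vv hvv lm hcong (n + 1)).1.1 - (seqA ff vv hvv lm hcong n).1.1 ∈ MM ^ (n + 2)) ∧
    ((seqA ff vv hvv lm hcong (n + 1)).1.2.1 - (seqA ff vv hvv lm hcong n).1.2.1 ∈ MM ^ (n + 2)) ∧
    ∀ j, j < n + 3 →
      (seqA ff vv hvv lm hcong (n + 1)).1.2.2 j = (seqA ff vv hvv lm hcong n).1.2.2 j := by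
  have h := (step (hv := hvv) ff n _ (seqA ff vv hvv lm hcong n).2).choose_spec
  exact ⟨h.2.1, h.2.2.1, h.2.2.2⟩

end Iteration

lemma eq_of_forall_JJ {x y : MvPowerSeries (Fin 3) k}
    (h : ∀ N, x - y ∈ JJ k N) : x = y := by
  rw [← sub_eq_zero]
  apply MvPowerSeries.ext
  intro d
  rw [map_zero]
  exact mem_JJ.mp (h (dg d + 1)) d (by omega)

end Stmt13Aux

/-- Let `A = k[[x,y,z]]` and `f ∈ A` irreducible with
`f ≡ x₀y₀ + λz₀² mod m³` for some regular system of parameters `x₀, y₀, z₀` and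
`λ ∈ k`.  Then there is a regular system of parameters `x, y, z` and `n ≥ 2` with
`(f) = (xy + zⁿ)`. -/
theorem stmt13 {k : Type*} [Field k] (f : MvPowerSeries (Fin 3) k)
    (hf : Irreducible f) (v : Fin 3 → MvPowerSeries (Fin 3) k) (hv : IsRegSys v)
    (lam : k)
    (hcong : f - (v 0 * v 1 + MvPowerSeries.C (σ := Fin 3) (R := k) lam * v 2 ^ 2)
      ∈ (IsLocalRing.maximalIdeal (MvPowerSeries (Fin 3) k)) ^ 3) :
    ∃ (w : Fin 3 → MvPowerSeries (Fin 3) k) (n : ℕ),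
      IsRegSys w ∧ 2 ≤ n ∧
      Ideal.span {f} = Ideal.span {w 0 * w 1 + w 2 ^ n} := by
  classical
  have hsp : Ideal.span (Set.range v) = maximalIdeal (MvPowerSeries (Fin 3) k) := hv
  have hv0 : v 0 ∈ maximalIdeal (MvPowerSeries (Fin 3) k) := by
    rw [← hsp]; exact Ideal.subset_span ⟨0, rfl⟩
  have hv1 : v 1 ∈ maximalIdeal (MvPowerSeries (Fin 3) k) := by
    rw [← hsp]; exact Ideal.subset_span ⟨1, rfl⟩
  have hv2 : v 2 ∈ maximalIdeal (MvPowerSeries (Fin 3) k) := by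
    rw [← hsp]; exact Ideal.subset_span ⟨2, rfl⟩
  have hv2J : ∀ m : ℕ, v 2 ^ m ∈ JJ k m := fun m =>
    pow_maximalIdeal_le_JJ m (Ideal.pow_mem_pow hv2 m)
  set s := seqA f v hsp lam hcong with hs
  set an : ℕ → MvPowerSeries (Fin 3) k := fun n => (s n).1.1 with han
  set bn : ℕ → MvPowerSeries (Fin 3) k := fun n => (s n).1.2.1 with hbn
  set cn : ℕ → ℕ → k := fun n => (s n).1.2.2 with hcn
  -- stability of the coefficients
  have stab : ∀ n m, m ≤ n → ∀ j, j < m + 3 → cn n j = cn m j := by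
    intro n
    induction n with
    | zero =>
      intro m hm j hj
      have : m = 0 := by omega
      subst this; rfl
    | succ n ih =>
      intro m hm j hj
      rcases Nat.eq_or_lt_of_le hm with h' | h'
      · subst h'; rfl
      · have hm' : m ≤ n := by omega
        have hstep := (seqA_succ_spec f v hsp lam hcong n).2.2 j (by omega)
        calc cn (n + 1) j = cn n j := hstep
          _ = cn m j := ih m hm' j hj
  set cinf : ℕ → k := fun j => cn j j with hcinf
  have ceq : ∀ n j, j < n + 3 → cn n j = cinf j := by
    intro n j hj
    rcases le_or_gt j n with h | h
    · exact stab n j h j (by omega)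
    · exact (stab j n (by omega) j hj).symm
  have cinf_lt2 : ∀ j, j < 2 → cinf j = 0 := fun j hj => (s j).2.2.2.1 j hj
  -- limits
  obtain ⟨a, ha⟩ := exists_limit an (fun N => by
    have hd : an (N + 1) - an N ∈ JJ k (N + 2) :=
      pow_maximalIdeal_le_JJ (N + 2) (seqA_succ_spec f v hsp lam hcong N).1
    exact JJ_antitone (by omega) hd)
  obtain ⟨b, hb⟩ := exists_limit bn (fun N => by
    have hd : bn (N + 1) - bn N ∈ JJ k (N + 2) :=
      pow_maximalIdeal_le_JJ (N + 2) (seqA_succ_spec f v hsp lam hcong N).2.1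
    exact JJ_antitone (by omega) hd)
  obtain ⟨g, hg⟩ := exists_limit (fun N => GG v cinf N) (fun N => by
    show GG v cinf (N + 1) - GG v cinf N ∈ JJ k N
    simp only [GG, Finset.sum_range_succ]
    have heq : (∑ j ∈ Finset.range N, MvPowerSeries.C (σ := Fin 3) (R := k) (cinf j) * v 2 ^ j) +
        MvPowerSeries.C (σ := Fin 3) (R := k) (cinf N) * v 2 ^ N -
        (∑ j ∈ Finset.range N, MvPowerSeries.C (σ := Fin 3) (R := k) (cinf j) * v 2 ^ j) =
        MvPowerSeries.C (σ := Fin 3) (R := k) (cinf N) * v 2 ^ N := by ring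
    rw [heq]
    exact Ideal.mul_mem_left _ _ (hv2J N))
  -- the invariants of the limits
  have haJ1 : a ∈ JJ k 1 := by
    have h1 : an 1 ∈ maximalIdeal (MvPowerSeries (Fin 3) k) := by
      have heq : an 1 = (an 1 - v 0) + v 0 := by ring
      rw [heq]
      exact add_mem (Ideal.pow_le_self two_ne_zero (s 1).2.1) hv0
    have heq : a = (a - an 1) + an 1 := by ring
    rw [heq]
    exact add_mem (ha 1) (maximalIdeal_eq_JJ_one.le h1)
  have hbJ1 : b ∈ JJ k 1 := by
    have h1 : bn 1 ∈ maximalIdeal (MvPowerSeries (Fin 3) k) := by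
      have heq : bn 1 = (bn 1 - v 1) + v 1 := by ring
      rw [heq]
      exact add_mem (Ideal.pow_le_self two_ne_zero (s 1).2.2.1) hv1
    have heq : b = (b - bn 1) + bn 1 := by ring
    rw [heq]
    exact add_mem (hb 1) (maximalIdeal_eq_JJ_one.le h1)
  have haM2 : a - v 0 ∈ (maximalIdeal (MvPowerSeries (Fin 3) k)) ^ 2 := by
    have heq : a - v 0 = (a - an 2) + (an 2 - v 0) := by ring
    rw [heq]
    exact add_mem (JJ_le_pow 2 (ha 2)) (s 2).2.1
  have hbM2 : b - v 1 ∈ (maximalIdeal (MvPowerSeries (Fin 3) k)) ^ 2 := by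
    have heq : b - v 1 = (b - bn 2) + (bn 2 - v 1) := by ring
    rw [heq]
    exact add_mem (JJ_le_pow 2 (hb 2)) (s 2).2.2.1
  -- f = a * b + g
  have hfab : f = a * b + g := by
    refine (eq_of_forall_JJ fun N => ?_)
    have herr : f - (an N * bn N + GG v (cn N) (N + 3)) ∈
        (maximalIdeal (MvPowerSeries (Fin 3) k)) ^ (N + 3) := (s N).2.2.2.2.2
    have hGeq : GG v (cn N) (N + 3) = GG v cinf (N + 3) := by
      simp only [GG]
      exact Finset.sum_congr rfl fun j hj => by
        rw [Finset.mem_range] at hj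
        rw [ceq N j hj]
    have hsplit : f - (a * b + g) =
        (f - (an N * bn N + GG v (cn N) (N + 3))) +
        (an N * (bn N - b) + (an N - a) * b) + (GG v cinf (N + 3) - g) := by
      rw [hGeq]; ring
    rw [hsplit]
    refine add_mem (add_mem ?_ ?_) ?_
    · exact JJ_antitone (by omega) (pow_maximalIdeal_le_JJ _ herr)
    · refine add_mem (Ideal.mul_mem_left _ _ ?_) (Ideal.mul_mem_right _ _ ?_)
      · have heq : bn N - b = -(b - bn N) := by ring
        rw [heq]; exact neg_mem (hb N)
      · have heq : an N - a = -(a - an N) := by ring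
        rw [heq]; exact neg_mem (ha N)
    · have heq : GG v cinf (N + 3) - g = -(g - GG v cinf (N + 3)) := by ring
      rw [heq]
      exact neg_mem (JJ_antitone (by omega) (hg (N + 3)))
  by_cases hex : ∃ j, cinf j ≠ 0
  · -- main case : g = v 2 ^ n * u with u a unit
    set n := Nat.find hex with hn
    have hcn0 : cinf n ≠ 0 := Nat.find_spec hex
    have hmin : ∀ j, j < n → cinf j = 0 := fun j hj => by
      have := Nat.find_min hex hj
      simpa using this
    have hn2 : 2 ≤ n := by
      rcases Nat.lt_or_ge n 2 with h | h
      · exact absurd (cinf_lt2 n h) hcn0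
      · exact h
    set uN : ℕ → MvPowerSeries (Fin 3) k := fun N => ∑ j ∈ Finset.range N,
      MvPowerSeries.C (σ := Fin 3) (R := k) (cinf (n + j)) * v 2 ^ j with huN
    obtain ⟨u, hu⟩ := exists_limit uN (fun N => by
      show uN (N + 1) - uN N ∈ JJ k N
      simp only [huN, Finset.sum_range_succ]
      have heq : (∑ j ∈ Finset.range N, MvPowerSeries.C (σ := Fin 3) (R := k) (cinf (n + j)) * v 2 ^ j) +
          MvPowerSeries.C (σ := Fin 3) (R := k) (cinf (n + N)) * v 2 ^ N -
          (∑ j ∈ Finset.range N, MvPowerSeries.C (σ := Fin 3) (R := k) (cinf (n + j)) * v 2 ^ j) =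
          MvPowerSeries.C (σ := Fin 3) (R := k) (cinf (n + N)) * v 2 ^ N := by ring
      rw [heq]
      exact Ideal.mul_mem_left _ _ (hv2J N))
    have hGuN : ∀ N, GG v cinf (n + N) = v 2 ^ n * uN N := by
      intro N
      induction N with
      | zero =>
        simp only [huN, Nat.add_zero, Finset.range_zero, Finset.sum_empty, mul_zero]
        simp only [GG]
        exact Finset.sum_eq_zero fun j hj => by
          rw [Finset.mem_range] at hj
          rw [hmin j hj, map_zero, zero_mul]
      | succ N ih =>
        have h1 : n + (N + 1) = (n + N) + 1 := by omega
        rw [h1]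
        show GG v cinf ((n + N) + 1) = _
        rw [GG, Finset.sum_range_succ, ← GG, ih]
        simp only [huN, Finset.sum_range_succ]
        rw [mul_add]
        congr 1
        rw [pow_add]
        ring
    have hgu : g = v 2 ^ n * u := by
      refine eq_of_forall_JJ fun N => ?_
      have hsplit : g - v 2 ^ n * u =
          (g - GG v cinf (n + N)) + (GG v cinf (n + N) - v 2 ^ n * uN N) +
          v 2 ^ n * (uN N - u) := by ring
      have hmid : GG v cinf (n + N) - v 2 ^ n * uN N = 0 := by
        rw [hGuN N]; ring
      rw [hsplit, hmid, add_zero]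
      refine add_mem (JJ_antitone (by omega) (hg (n + N))) (Ideal.mul_mem_left _ _ ?_)
      have heq : uN N - u = -(u - uN N) := by ring
      rw [heq]; exact neg_mem (hu N)
    have hcu : MvPowerSeries.constantCoeff (σ := Fin 3) (R := k) u = cinf n := by
      have h1 : u - uN 1 ∈ JJ k 1 := hu 1
      have h2 : uN 1 = MvPowerSeries.C (σ := Fin 3) (R := k) (cinf n) := by
        simp [huN]
      have h3 := mem_JJ_one.mp h1
      rw [map_sub, h2, MvPowerSeries.constantCoeff_C] at h3
      exact sub_eq_zero.mp h3
    have huu : IsUnit u := by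
      rw [MvPowerSeries.isUnit_iff_constantCoeff, hcu]
      exact isUnit_iff_ne_zero.mpr hcn0
    obtain ⟨U, hU⟩ := huu
    set w : Fin 3 → MvPowerSeries (Fin 3) k := ![(↑U⁻¹ : MvPowerSeries (Fin 3) k) * a, b, v 2]
      with hw
    have hw0 : w 0 = (↑U⁻¹ : MvPowerSeries (Fin 3) k) * a := rfl
    have hw1 : w 1 = b := rfl
    have hw2 : w 2 = v 2 := rfl
    have hUU : (↑U : MvPowerSeries (Fin 3) k) * (↑U⁻¹ : MvPowerSeries (Fin 3) k) = 1 := U.mul_inv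
    have hkey : f = u * (w 0 * w 1 + w 2 ^ n) := by
      rw [hw0, hw1, hw2, hfab, hgu, ← hU]
      have heq : (↑U : MvPowerSeries (Fin 3) k) *
          ((↑U⁻¹ : MvPowerSeries (Fin 3) k) * a * b + v 2 ^ n) =
          ((↑U : MvPowerSeries (Fin 3) k) * (↑U⁻¹ : MvPowerSeries (Fin 3) k)) * (a * b) +
          (↑U : MvPowerSeries (Fin 3) k) * v 2 ^ n := by ring
      rw [heq, hUU]
      ring
    refine ⟨w, n, ?_, hn2, ?_⟩
    · -- IsRegSys w
      show Ideal.span (Set.range w) = maximalIdeal (MvPowerSeries (Fin 3) k)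
      have hrange : Set.range w =
          {(↑U⁻¹ : MvPowerSeries (Fin 3) k) * a, b, v 2} := by
        rw [hw]
        rw [Matrix.range_cons, Matrix.range_cons, Matrix.range_cons_empty]
        ext t
        simp only [Set.mem_insert_iff, Set.mem_union, Set.mem_singleton_iff]
      rw [hrange]
      have hspan2 : Ideal.span {(↑U⁻¹ : MvPowerSeries (Fin 3) k) * a, b, v 2} =
          Ideal.span {a, b, v 2} := by
        apply le_antisymm
        · rw [Ideal.span_le]
          rintro t (rfl | rfl | rfl)
          · exact Ideal.mul_mem_left _ _ (Ideal.subset_span (by simp))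
          · exact Ideal.subset_span (by simp)
          · exact Ideal.subset_span (by simp)
        · rw [Ideal.span_le]
          rintro t (rfl | rfl | rfl)
          · rename_i t
            have heq : t = (↑U : MvPowerSeries (Fin 3) k) *
                ((↑U⁻¹ : MvPowerSeries (Fin 3) k) * t) := by
              rw [← mul_assoc, hUU, one_mul]
            rw [heq]
            exact Ideal.mul_mem_left _ _ (Ideal.subset_span (by simp))
          · exact Ideal.subset_span (by simp)
          · exact Ideal.subset_span (by simp)
      rw [hspan2]
      -- Nakayama
      have hIle : Ideal.span {a, b, v 2} ≤ maximalIdeal (MvPowerSeries (Fin 3) k) := by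
        rw [Ideal.span_le]
        rintro t (rfl | rfl | rfl)
        · exact maximalIdeal_eq_JJ_one.symm.le haJ1
        · exact maximalIdeal_eq_JJ_one.symm.le hbJ1
        · exact hv2
      have hMle : maximalIdeal (MvPowerSeries (Fin 3) k) ≤ Ideal.span {a, b, v 2} ⊔
          maximalIdeal (MvPowerSeries (Fin 3) k) • maximalIdeal (MvPowerSeries (Fin 3) k) := by
        have hMle' : Ideal.span (Set.range v) ≤ Ideal.span {a, b, v 2} ⊔
            maximalIdeal (MvPowerSeries (Fin 3) k) • maximalIdeal (MvPowerSeries (Fin 3) k) := by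
          rw [Ideal.span_le]
          rintro t ⟨i, rfl⟩
          simp only [SetLike.mem_coe]
          fin_cases i
          · show v 0 ∈ _
            have heq : v 0 = a + (v 0 - a) := by ring
            rw [heq]
            refine Submodule.add_mem_sup (Ideal.subset_span (by simp)) ?_
            have h2 : v 0 - a = -(a - v 0) := by ring
            rw [h2, smul_eq_mul, ← pow_two]
            exact neg_mem haM2
          · show v 1 ∈ _
            have heq : v 1 = b + (v 1 - b) := by ring
            rw [heq]
            refine Submodule.add_mem_sup (Ideal.subset_span (by simp)) ?_
            have h2 : v 1 - b = -(b - v 1) := by ring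
            rw [h2, smul_eq_mul, ← pow_two]
            exact neg_mem hbM2
          · show v 2 ∈ _
            exact Submodule.mem_sup_left (Ideal.subset_span (by simp))
        exact hsp ▸ hMle'
      have hfg : (maximalIdeal (MvPowerSeries (Fin 3) k)).FG := by
        rw [← hsp]
        exact Submodule.fg_span (Set.finite_range v)
      have hjac : maximalIdeal (MvPowerSeries (Fin 3) k) ≤ Ideal.jacobson ⊥ :=
        IsLocalRing.maximalIdeal_le_jacobson ⊥
      have hnak := Submodule.sup_eq_sup_smul_of_le_smul_of_le_jacobson hfg hjac hMle
      rw [Submodule.bot_smul, sup_bot_eq] at hnak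
      rw [sup_eq_right.mpr hIle] at hnak
      exact hnak.symm
    · -- span equality
      haveI : IsDomain (MvPowerSeries (Fin 3) k) := NoZeroDivisors.to_isDomain _
      refine (Ideal.span_singleton_eq_span_singleton.mpr ?_).symm
      exact ⟨U, by rw [hU, hkey]; ring⟩
  · -- degenerate case : f = a * b contradicts irreducibility
    exfalso
    push_neg at hex
    have hg0 : g = 0 := by
      refine eq_of_forall_JJ fun N => ?_
      have hGz : GG v cinf N = 0 := by
        rw [GG]
        exact Finset.sum_eq_zero fun j _ => by rw [hex j, map_zero, zero_mul]
      rw [sub_zero]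
      have := hg N
      rwa [hGz, sub_zero] at this
    rw [hg0, add_zero] at hfab
    rcases hf.isUnit_or_isUnit hfab with h | h
    · rw [MvPowerSeries.isUnit_iff_constantCoeff, mem_JJ_one.mp haJ1] at h
      exact (isUnit_iff_ne_zero.mp h) rfl
    · rw [MvPowerSeries.isUnit_iff_constantCoeff, mem_JJ_one.mp hbJ1] at h
      exact (isUnit_iff_ne_zero.mp h) rfl
end

section
/- Let k be a field of characteristic p and ω, ω' ∈ k. The k-algebras k[t]/(t^p − ω) and k[t']/(t'^p − ω') are isomorphic if and only if k^p(ω) = k^p(ω') as subfields of k. -/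
open Polynomial

section Aux

variable {k : Type*} [Field k] (p : ℕ) [Fact p.Prime] [CharP k p]

theorem stmt17_nontrivial (ω : k) : Nontrivial (AdjoinRoot (X ^ p - C ω)) := by
  refine AdjoinRoot.nontrivial _ ?_
  rw [degree_X_pow_sub_C (Fact.out (p := p.Prime)).pos]
  exact_mod_cast (Fact.out (p := p.Prime)).ne_zero

theorem stmt17_charP (ω : k) : CharP (AdjoinRoot (X ^ p - C ω)) p := by
  haveI := stmt17_nontrivial p ω
  exact charP_of_injective_algebraMap (algebraMap k _).injective p

theorem stmt17_root_pow (ω : k) :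
    AdjoinRoot.root (X ^ p - C ω) ^ p = algebraMap k _ ω := by
  have h : (Polynomial.aeval (AdjoinRoot.root (X ^ p - C ω))) (X ^ p - C ω) = 0 := by
    rw [AdjoinRoot.aeval_eq, AdjoinRoot.mk_self]
  rwa [map_sub, map_pow, aeval_X, aeval_C, sub_eq_zero] at h

/-- The set of `y : k` that become `p`-th powers in `k[t]/(t^p - ω)` is a subfield. -/
noncomputable def stmt17_S (ω : k) : Subfield k where
  carrier := {y : k | ∃ x : AdjoinRoot (X ^ p - C ω), x ^ p = algebraMap k _ y}
  zero_mem' := ⟨0, by simp [(Fact.out (p := p.Prime)).ne_zero]⟩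
  one_mem' := ⟨1, by simp⟩
  add_mem' := by
    haveI := stmt17_charP p ω
    rintro a b ⟨x, hx⟩ ⟨y, hy⟩
    exact ⟨x + y, by rw [add_pow_char, hx, hy, map_add]⟩
  mul_mem' := by
    rintro a b ⟨x, hx⟩ ⟨y, hy⟩
    exact ⟨x * y, by rw [mul_pow, hx, hy, map_mul]⟩
  neg_mem' := by
    haveI := stmt17_charP p ω
    rintro a ⟨x, hx⟩
    refine ⟨-x, ?_⟩
    have : (0 - x) ^ p = 0 ^ p - x ^ p := sub_pow_char _ _
    simpa [(Fact.out (p := p.Prime)).ne_zero, hx] using this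
  inv_mem' := by
    rintro a ⟨x, hx⟩
    rcases eq_or_ne a 0 with rfl | ha
    · exact ⟨0, by simp [(Fact.out (p := p.Prime)).ne_zero]⟩
    · refine ⟨x ^ (p - 1) * algebraMap k _ a⁻¹, ?_⟩
      have h1 : a ^ p = a ^ (p - 1) * a := by
        rw [← pow_succ, Nat.sub_add_cancel (Fact.out (p := p.Prime)).one_le]
      have h2 : a ^ (p - 1) * (a⁻¹) ^ p = a⁻¹ := by
        rw [inv_pow, h1, mul_inv, ← mul_assoc, mul_inv_cancel₀ (pow_ne_zero _ ha), one_mul]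
      rw [mul_pow, ← pow_mul, mul_comm (p - 1) p, pow_mul, hx, ← map_pow, ← map_pow,
        ← map_mul, h2]

/-- Key lemma: `y` is a `p`-th power in `k[t]/(t^p - ω)` iff `y ∈ k^p(ω)`. -/
theorem stmt17_key (ω y : k) :
    (∃ x : AdjoinRoot (X ^ p - C ω), x ^ p = algebraMap k _ y) ↔
      y ∈ Subfield.closure (insert ω (Set.range fun x : k => x ^ p)) := by
  haveI := stmt17_nontrivial p ω
  constructor
  · rintro ⟨x, hx⟩
    obtain ⟨g, rfl⟩ := AdjoinRoot.mk_surjective x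
    have e1 : (AdjoinRoot.mk (X ^ p - C ω) g) ^ p
        = AdjoinRoot.mk (X ^ p - C ω) (g ^ p) := by rw [map_pow]
    have e2 : g ^ p = expand k p (g.map (frobenius k p)) := by
      rw [← Polynomial.map_expand, Polynomial.map_frobenius_expand]
    have e3 : AdjoinRoot.mk (X ^ p - C ω) (expand k p (g.map (frobenius k p)))
        = algebraMap k _ ((g.map (frobenius k p)).eval ω) := by
      rw [← AdjoinRoot.aeval_eq, Polynomial.expand_aeval, stmt17_root_pow,
        aeval_algebraMap_apply_eq_algebraMap_eval]
    have hy : y = (g.map (frobenius k p)).eval ω := by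
      apply (algebraMap k (AdjoinRoot (X ^ p - C ω))).injective
      rw [← hx, e1, e2, e3]
    rw [hy, Polynomial.eval_eq_sum_range]
    refine Subfield.sum_mem _ fun i _ => Subfield.mul_mem _ ?_ (Subfield.pow_mem _ ?_ _)
    · rw [Polynomial.coeff_map]
      exact Subfield.subset_closure (Set.mem_insert_iff.2 (Or.inr ⟨g.coeff i, rfl⟩))
    · exact Subfield.subset_closure (Set.mem_insert _ _)
  · intro hy
    have hsub : Subfield.closure (insert ω (Set.range fun x : k => x ^ p)) ≤ stmt17_S p ω := by
      rw [Subfield.closure_le]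
      rintro z (rfl | ⟨a, rfl⟩)
      · exact ⟨AdjoinRoot.root _, stmt17_root_pow p z⟩
      · exact ⟨algebraMap k _ a, by rw [← map_pow]⟩
    exact hsub hy

end Aux

/-- The `k`-algebras `k[t]/(t^p - ω)` and `k[t']/(t'^p - ω')` are isomorphic if and
only if the subfields `k^p(ω)` and `k^p(ω')` of `k` coincide. -/
theorem stmt17 {k : Type*} [Field k] (p : ℕ) [Fact p.Prime] [CharP k p] (ω ω' : k) :
    Nonempty (AdjoinRoot (Polynomial.X ^ p - Polynomial.C ω) ≃ₐ[k]
      AdjoinRoot (Polynomial.X ^ p - Polynomial.C ω')) ↔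
    Subfield.closure (insert ω (Set.range fun x : k => x ^ p)) =
      Subfield.closure (insert ω' (Set.range fun x : k => x ^ p)) := by
  have hp : p.Prime := Fact.out
  constructor
  · rintro ⟨e⟩
    have hω : ω ∈ Subfield.closure (insert ω' (Set.range fun x : k => x ^ p)) := by
      refine (stmt17_key p ω' ω).1 ⟨e (AdjoinRoot.root _), ?_⟩
      rw [← map_pow, stmt17_root_pow, AlgEquiv.commutes]
    have hω' : ω' ∈ Subfield.closure (insert ω (Set.range fun x : k => x ^ p)) := by
      refine (stmt17_key p ω ω').1 ⟨e.symm (AdjoinRoot.root _), ?_⟩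
      rw [← map_pow, stmt17_root_pow, AlgEquiv.commutes]
    refine le_antisymm (Subfield.closure_le.2 ?_) (Subfield.closure_le.2 ?_)
    · exact Set.insert_subset hω
        ((Set.subset_insert _ _).trans Subfield.subset_closure)
    · exact Set.insert_subset hω'
        ((Set.subset_insert _ _).trans Subfield.subset_closure)
  · intro h
    have hω' : ω' ∈ Subfield.closure (insert ω (Set.range fun x : k => x ^ p)) := by
      rw [h]; exact Subfield.subset_closure (Set.mem_insert _ _)
    have hω : ω ∈ Subfield.closure (insert ω' (Set.range fun x : k => x ^ p)) := by
      rw [← h]; exact Subfield.subset_closure (Set.mem_insert _ _)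
    obtain ⟨x, hx⟩ := (stmt17_key p ω ω').2 hω'
    obtain ⟨y, hy⟩ := (stmt17_key p ω' ω).2 hω
    have haevx : Polynomial.aeval x (Polynomial.X ^ p - Polynomial.C ω') = 0 := by
      rw [map_sub, map_pow, Polynomial.aeval_X, Polynomial.aeval_C, hx, sub_self]
    have haevy : Polynomial.aeval y (Polynomial.X ^ p - Polynomial.C ω) = 0 := by
      rw [map_sub, map_pow, Polynomial.aeval_X, Polynomial.aeval_C, hy, sub_self]
    by_cases hpow : ∃ a : k, a ^ p = ω
    · -- degenerate case: ω and ω' are both p-th powers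
      obtain ⟨a, ha⟩ := hpow
      have hb : ∃ b : k, b ^ p = ω' := by
        have hle : Subfield.closure (insert ω (Set.range fun x : k => x ^ p))
            ≤ (frobenius k p).fieldRange := by
          rw [Subfield.closure_le]
          rintro z (rfl | ⟨c, rfl⟩)
          · exact ⟨a, ha⟩
          · exact ⟨c, rfl⟩
        exact hle hω'
      obtain ⟨b, hb⟩ := hb
      haveI := stmt17_charP p ω
      haveI := stmt17_charP p ω'
      have hx1 : Polynomial.aeval
          (AdjoinRoot.root (Polynomial.X ^ p - Polynomial.C ω') + algebraMap k _ (a - b))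
          (Polynomial.X ^ p - Polynomial.C ω) = 0 := by
        rw [map_sub, map_pow, Polynomial.aeval_X, Polynomial.aeval_C, add_pow_char,
          stmt17_root_pow, ← map_pow, sub_pow_char, ← map_add, ← map_sub, ha, hb,
          show ω' + (ω - ω') - ω = 0 by ring, map_zero]
      have hy1 : Polynomial.aeval
          (AdjoinRoot.root (Polynomial.X ^ p - Polynomial.C ω) + algebraMap k _ (b - a))
          (Polynomial.X ^ p - Polynomial.C ω') = 0 := by
        rw [map_sub, map_pow, Polynomial.aeval_X, Polynomial.aeval_C, add_pow_char,
          stmt17_root_pow, ← map_pow, sub_pow_char, ← map_add, ← map_sub, ha, hb,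
          show ω + (ω' - ω) - ω' = 0 by ring, map_zero]
      refine ⟨AlgEquiv.ofAlgHom (AdjoinRoot.liftAlgHom _ (Algebra.ofId _ _) _
          (by rw [Algebra.toRingHom_ofId, ← aeval_def]; exact hx1)) (AdjoinRoot.liftAlgHom _ (Algebra.ofId _ _) _
          (by rw [Algebra.toRingHom_ofId, ← aeval_def]; exact hy1))
        (AdjoinRoot.algHom_ext ?_) (AdjoinRoot.algHom_ext ?_)⟩
      · simp only [AlgHom.coe_comp, Function.comp_apply, AdjoinRoot.liftAlgHom_root, map_add,
          AlgHom.commutes, AlgHom.coe_id, id_eq]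
        rw [add_assoc, ← map_add, show a - b + (b - a) = 0 by ring, map_zero, add_zero]
      · simp only [AlgHom.coe_comp, Function.comp_apply, AdjoinRoot.liftAlgHom_root, map_add,
          AlgHom.commutes, AlgHom.coe_id, id_eq]
        rw [add_assoc, ← map_add, show b - a + (a - b) = 0 by ring, map_zero, add_zero]
    · -- nondegenerate case: both polynomials are irreducible
      push_neg at hpow
      have hpow' : ∀ b : k, b ^ p ≠ ω' := by
        intro b hb
        have hle : Subfield.closure (insert ω' (Set.range fun x : k => x ^ p))
            ≤ (frobenius k p).fieldRange := by
          rw [Subfield.closure_le]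
          rintro z (rfl | ⟨c, rfl⟩)
          · exact ⟨b, hb⟩
          · exact ⟨c, rfl⟩
        obtain ⟨a, ha⟩ := hle hω
        exact hpow a ha
      haveI : Fact (Irreducible (Polynomial.X ^ p - Polynomial.C ω)) :=
        ⟨X_pow_sub_C_irreducible_of_prime hp hpow⟩
      haveI : Fact (Irreducible (Polynomial.X ^ p - Polynomial.C ω')) :=
        ⟨X_pow_sub_C_irreducible_of_prime hp hpow'⟩
      have hf0 : (Polynomial.X ^ p - Polynomial.C ω) ≠ 0 :=
        (Polynomial.monic_X_pow_sub_C ω hp.ne_zero).ne_zero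
      haveI : Module.Finite k (AdjoinRoot (Polynomial.X ^ p - Polynomial.C ω)) :=
        (AdjoinRoot.powerBasis hf0).finite
      set φ : AdjoinRoot (Polynomial.X ^ p - Polynomial.C ω') →ₐ[k]
          AdjoinRoot (Polynomial.X ^ p - Polynomial.C ω) := AdjoinRoot.liftAlgHom _ (Algebra.ofId _ _) _ haevx
      set ψ : AdjoinRoot (Polynomial.X ^ p - Polynomial.C ω) →ₐ[k]
          AdjoinRoot (Polynomial.X ^ p - Polynomial.C ω') := AdjoinRoot.liftAlgHom _ (Algebra.ofId _ _) _ haevy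
      have hχ : Function.Injective (φ.comp ψ) := (φ.comp ψ).toRingHom.injective
      have hχs : Function.Surjective (φ.comp ψ) :=
        (LinearMap.injective_iff_surjective (f := (φ.comp ψ).toLinearMap)).1 hχ
      exact ⟨(AlgEquiv.ofBijective φ ⟨φ.toRingHom.injective,
        Function.Surjective.of_comp (g := ψ) hχs⟩).symm⟩
end
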